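/- Let C be a positive integer, X ∈ ℝ^{C×C} symmetric positive definite, v̂ ∈ ℝ^C, and L ≥ 0. For each n ∈ {1, …, C} let φ_n : ℝ → ℝ be L-Lipschitz and nonincreasing, and define φ : ℝ^C → ℝ^C componentwise. If 0 < ε < min{1, 2/(‖X‖L + 1)²}, then there exists a unique q♯ ∈ ℝ^C with q♯ = φ(X q♯ + v̂), and for every initial condition q(0) ∈ ℝ^C the sequence defined by q(t+1) = q(t) + ε(φ(X q(t) + v̂) − q(t)) converges to q♯ as t → ∞; moreover the voltages v(t) = X q(t) + v̂ converge to v♯ = X q♯ + v̂. -/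

import Mathlib

open scoped Matrix.Norms.L2Operator
open Matrix Filter

section AuxVV
variable {C : ℕ} {X : Matrix (Fin C) (Fin C) ℝ}

private lemma aux_dot_nonneg (u : Fin C → ℝ) : 0 ≤ u ⬝ᵥ u :=
  Finset.sum_nonneg fun _ _ => mul_self_nonneg _

private lemma aux_le_of_sq_le_sq {a b : ℝ} (h : a^2 ≤ b^2) (hb : 0 ≤ b) : a ≤ b := by nlinarith

private lemma aux_dotCS (u v : Fin C → ℝ) : (u ⬝ᵥ v)^2 ≤ (u ⬝ᵥ u) * (v ⬝ᵥ v) := by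
  simpa [dotProduct, sq] using Finset.sum_mul_sq_le_sq_mul_sq Finset.univ u v

private lemma aux_sym (hX : X.IsHermitian) (u v : Fin C → ℝ) :
    u ⬝ᵥ (X *ᵥ v) = v ⬝ᵥ (X *ᵥ u) := by
  have hs : ∀ i j, X j i = X i j := by
    intro i j
    conv_lhs => rw [← hX]
    simp [Matrix.conjTranspose_apply]
  simp only [Matrix.mulVec, dotProduct, Finset.mul_sum]
  rw [Finset.sum_comm]
  refine Finset.sum_congr rfl fun i _ => Finset.sum_congr rfl fun j _ => ?_
  rw [hs i j]; ring

private lemma aux_Qexp (hX : X.IsHermitian) (a b : ℝ) (u v : Fin C → ℝ) :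
    (a • u + b • v) ⬝ᵥ (X *ᵥ (a • u + b • v))
      = a^2 * (u ⬝ᵥ (X *ᵥ u)) + 2*a*b*(u ⬝ᵥ (X *ᵥ v)) + b^2 * (v ⬝ᵥ (X *ᵥ v)) := by
  have h1 := aux_sym hX v u
  simp only [Matrix.mulVec_add, Matrix.mulVec_smul, dotProduct_add,
    add_dotProduct, dotProduct_smul, smul_dotProduct, smul_eq_mul]
  rw [h1]; ring

/-- Cauchy-Schwarz for the positive semidefinite bilinear form of `X`. -/
private lemma aux_XCS (hX : X.PosDef) (u v : Fin C → ℝ) :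
    (u ⬝ᵥ (X *ᵥ v))^2 ≤ (u ⬝ᵥ (X *ᵥ u)) * (v ⬝ᵥ (X *ᵥ v)) := by
  have hnn : ∀ w : Fin C → ℝ, 0 ≤ w ⬝ᵥ (X *ᵥ w) := fun w => by
    simpa using hX.posSemidef.dotProduct_mulVec_nonneg w
  have hexp : ∀ t : ℝ, (u + t • v) ⬝ᵥ (X *ᵥ (u + t • v))
      = u ⬝ᵥ (X *ᵥ u) + 2 * t * (u ⬝ᵥ (X *ᵥ v)) + t^2 * (v ⬝ᵥ (X *ᵥ v)) := by
    intro t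
    have h := aux_Qexp hX.1 1 t u v
    simpa using h
  rcases eq_or_ne v 0 with rfl | hv
  · simp [hnn u, mul_nonneg (hnn u)]
  · have hvpos : 0 < v ⬝ᵥ (X *ᵥ v) := by simpa using hX.dotProduct_mulVec_pos hv
    have h0 := hnn (u + (-(u ⬝ᵥ (X *ᵥ v)) / (v ⬝ᵥ (X *ᵥ v))) • v)
    rw [hexp] at h0
    have heq : (u ⬝ᵥ (X *ᵥ u)) + 2 * (-(u ⬝ᵥ (X *ᵥ v)) / (v ⬝ᵥ (X *ᵥ v))) * (u ⬝ᵥ (X *ᵥ v))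
        + (-(u ⬝ᵥ (X *ᵥ v)) / (v ⬝ᵥ (X *ᵥ v)))^2 * (v ⬝ᵥ (X *ᵥ v))
        = (u ⬝ᵥ (X *ᵥ u)) - (u ⬝ᵥ (X *ᵥ v))^2 / (v ⬝ᵥ (X *ᵥ v)) := by
      field_simp
      ring
    rw [heq, sub_nonneg] at h0
    calc (u ⬝ᵥ (X *ᵥ v))^2 = (u ⬝ᵥ (X *ᵥ v))^2 / (v ⬝ᵥ (X *ᵥ v)) * (v ⬝ᵥ (X *ᵥ v)) := by
          field_simp
      _ ≤ (u ⬝ᵥ (X *ᵥ u)) * (v ⬝ᵥ (X *ᵥ v)) := mul_le_mul_of_nonneg_right h0 (le_of_lt hvpos)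

private lemma aux_normsq (x : EuclideanSpace ℝ (Fin C)) : ‖x‖^2 = x ⬝ᵥ x := by
  rw [EuclideanSpace.norm_eq, Real.sq_sqrt (by positivity)]
  simp [dotProduct, Real.norm_eq_abs, sq_abs, sq]

private lemma aux_opbound (X : Matrix (Fin C) (Fin C) ℝ) (u : Fin C → ℝ) :
    (X *ᵥ u) ⬝ᵥ (X *ᵥ u) ≤ ‖X‖^2 * (u ⬝ᵥ u) := by
  have h := X.l2_opNorm_mulVec ((EuclideanSpace.equiv (Fin C) ℝ).symm u)
  have h2 : ‖(EuclideanSpace.equiv (Fin C) ℝ).symm (X *ᵥ ((EuclideanSpace.equiv (Fin C) ℝ).symm u))‖^2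
      ≤ (‖X‖ * ‖(EuclideanSpace.equiv (Fin C) ℝ).symm u‖)^2 :=
    pow_le_pow_left₀ (norm_nonneg _) h 2
  rw [mul_pow, aux_normsq, aux_normsq] at h2
  exact h2

private lemma aux_Qup (X : Matrix (Fin C) (Fin C) ℝ) (u : Fin C → ℝ) :
    u ⬝ᵥ (X *ᵥ u) ≤ ‖X‖ * (u ⬝ᵥ u) := by
  refine aux_le_of_sq_le_sq ?_ (mul_nonneg (norm_nonneg _) (aux_dot_nonneg u))
  calc (u ⬝ᵥ (X *ᵥ u))^2 ≤ (u ⬝ᵥ u) * ((X *ᵥ u) ⬝ᵥ (X *ᵥ u)) := aux_dotCS u (X *ᵥ u)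
    _ ≤ (u ⬝ᵥ u) * (‖X‖^2 * (u ⬝ᵥ u)) :=
        mul_le_mul_of_nonneg_left (aux_opbound X u) (aux_dot_nonneg u)
    _ = (‖X‖ * (u ⬝ᵥ u))^2 := by ring

/-- `‖X u‖² ≤ ‖X‖ * Q u` for positive definite `X`. -/
private lemma aux_wQ (hX : X.PosDef) (u : Fin C → ℝ) :
    (X *ᵥ u) ⬝ᵥ (X *ᵥ u) ≤ ‖X‖ * (u ⬝ᵥ (X *ᵥ u)) := by
  have hQnn : 0 ≤ u ⬝ᵥ (X *ᵥ u) := by simpa using hX.posSemidef.dotProduct_mulVec_nonneg u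
  have h1 : u ⬝ᵥ (X *ᵥ (X *ᵥ u)) = (X *ᵥ u) ⬝ᵥ (X *ᵥ u) := aux_sym hX.1 u (X *ᵥ u)
  have hCS := aux_XCS hX u (X *ᵥ u)
  rw [h1] at hCS
  have hQw : (X *ᵥ u) ⬝ᵥ (X *ᵥ (X *ᵥ u)) ≤ ‖X‖ * ((X *ᵥ u) ⬝ᵥ (X *ᵥ u)) := aux_Qup X (X *ᵥ u)
  have hchain : ((X *ᵥ u) ⬝ᵥ (X *ᵥ u))^2
      ≤ (u ⬝ᵥ (X *ᵥ u)) * (‖X‖ * ((X *ᵥ u) ⬝ᵥ (X *ᵥ u))) :=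
    hCS.trans (mul_le_mul_of_nonneg_left hQw hQnn)
  rcases (aux_dot_nonneg (X *ᵥ u)).eq_or_lt with h | hpos
  · rw [← h]
    exact mul_nonneg (norm_nonneg _) hQnn
  · nlinarith [hchain, hpos]

/-- coercivity: `Q u ≥ ‖X⁻¹‖⁻¹ (u ⬝ᵥ u)`. -/
private lemma aux_coercive (hC : 0 < C) (hX : X.PosDef) :
    ∃ c : ℝ, 0 < c ∧ ∀ u : Fin C → ℝ, c * (u ⬝ᵥ u) ≤ u ⬝ᵥ (X *ᵥ u) := by
  classical
  have hdet : IsUnit X.det := isUnit_iff_ne_zero.mpr hX.det_pos.ne'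
  have hXinv : ∀ u : Fin C → ℝ, X *ᵥ (X⁻¹ *ᵥ u) = u := by
    intro u
    rw [Matrix.mulVec_mulVec, Matrix.mul_nonsing_inv X hdet, Matrix.one_mulVec]
  have hinv_ne : X⁻¹ ≠ (0 : Matrix (Fin C) (Fin C) ℝ) := by
    intro h0
    have h1 : X * X⁻¹ = 1 := Matrix.mul_nonsing_inv X hdet
    rw [h0, mul_zero] at h1
    have h2 := congrFun (congrFun h1.symm ⟨0, hC⟩) ⟨0, hC⟩
    simp [Matrix.one_apply] at h2
  have hXin : 0 < ‖X⁻¹‖ := norm_pos_iff.mpr hinv_ne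
  refine ⟨‖X⁻¹‖⁻¹, inv_pos.mpr hXin, fun u => ?_⟩
  have hQnn : 0 ≤ u ⬝ᵥ (X *ᵥ u) := by simpa using hX.posSemidef.dotProduct_mulVec_nonneg u
  rcases (aux_dot_nonneg u).eq_or_lt with h | hpos
  · rw [← h, mul_zero]; exact hQnn
  · have hCS := aux_XCS hX u (X⁻¹ *ᵥ u)
    rw [hXinv] at hCS
    -- hCS : (u ⬝ᵥ u)^2 ≤ Q u * ((X⁻¹ *ᵥ u) ⬝ᵥ u)
    have hb : (X⁻¹ *ᵥ u) ⬝ᵥ u ≤ ‖X⁻¹‖ * (u ⬝ᵥ u) := by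
      refine aux_le_of_sq_le_sq ?_ (mul_nonneg (norm_nonneg _) (aux_dot_nonneg u))
      calc ((X⁻¹ *ᵥ u) ⬝ᵥ u)^2 ≤ ((X⁻¹ *ᵥ u) ⬝ᵥ (X⁻¹ *ᵥ u)) * (u ⬝ᵥ u) := aux_dotCS _ _
        _ ≤ (‖X⁻¹‖^2 * (u ⬝ᵥ u)) * (u ⬝ᵥ u) :=
            mul_le_mul_of_nonneg_right (aux_opbound X⁻¹ u) (aux_dot_nonneg u)
        _ = (‖X⁻¹‖ * (u ⬝ᵥ u))^2 := by ring
    have hchain : (u ⬝ᵥ u)^2 ≤ (u ⬝ᵥ (X *ᵥ u)) * (‖X⁻¹‖ * (u ⬝ᵥ u)) :=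
      hCS.trans (mul_le_mul_of_nonneg_left hb hQnn)
    rw [inv_mul_le_iff₀ hXin] at *
    nlinarith [hchain, hpos, hXin]


private lemma aux_mulVec_sub (X : Matrix (Fin C) (Fin C) ℝ)
    (q p : EuclideanSpace ℝ (Fin C)) (n : Fin C) :
    (X *ᵥ (q - p)) n = X.mulVec q n - X.mulVec p n := by
  show (X *ᵥ fun m => q m - p m) n = _
  simp [Matrix.mulVec, dotProduct, mul_sub, Finset.sum_sub_distrib]

/-- the quadratic form of `X` on Euclidean space. -/
private def QX (X : Matrix (Fin C) (Fin C) ℝ) (x : EuclideanSpace ℝ (Fin C)) : ℝ :=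
  x ⬝ᵥ (X *ᵥ x)

end AuxVV

set_option maxHeartbeats 1000000 in
/-- Global asymptotic stability of the incremental Volt/Var control rule:
under conditions C1)-C2) on the `φ n` and the stepsize condition
`0 < ε < min {1, 2/(‖X‖L+1)²}`, there exists a unique equilibrium
`q♯ = φ(X q♯ + v̂)`, the iterates `q(t+1) = q(t) + ε (φ(X q(t) + v̂) - q(t))`
converge to `q♯` from every initial condition, and the voltages
`v(t) = X q(t) + v̂` converge to `v♯ = X q♯ + v̂`. -/
theorem stmt_9 (C : ℕ) (hC : 0 < C) (L : ℝ) (hL : 0 ≤ L)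
    (X : Matrix (Fin C) (Fin C) ℝ) (hX : X.PosDef)
    (vhat : EuclideanSpace ℝ (Fin C))
    (φ : Fin C → ℝ → ℝ)
    (hlip : ∀ n x y, |φ n x - φ n y| ≤ L * |x - y|)
    (hmono : ∀ n, Antitone (φ n))
    (ε : ℝ) (hε0 : 0 < ε) (hε : ε < min 1 (2 / (‖X‖ * L + 1) ^ 2))
    (F : EuclideanSpace ℝ (Fin C) → EuclideanSpace ℝ (Fin C))
    (hF : ∀ q n, F q n = q n + ε * (φ n (X.mulVec q n + vhat n) - q n)) :
    ∃ qs : EuclideanSpace ℝ (Fin C),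
      (∀ n, qs n = φ n (X.mulVec qs n + vhat n)) ∧
      (∀ q : EuclideanSpace ℝ (Fin C),
        (∀ n, q n = φ n (X.mulVec q n + vhat n)) → q = qs) ∧
      (∀ q0 : EuclideanSpace ℝ (Fin C),
        Filter.Tendsto (fun t => F^[t] q0) Filter.atTop (nhds qs)) ∧
      (∀ q0 : EuclideanSpace ℝ (Fin C),
        Filter.Tendsto
          (fun t => (WithLp.toLp 2 (fun n => X.mulVec (F^[t] q0) n + vhat n) : EuclideanSpace ℝ (Fin C)))
          Filter.atTop (nhds (WithLp.toLp 2 (fun n => X.mulVec qs n + vhat n) : EuclideanSpace ℝ (Fin C)))) := by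
  have hXnn : (0:ℝ) ≤ ‖X‖ := norm_nonneg _
  have hε1 : ε < 1 := lt_of_lt_of_le hε (min_le_left _ _)
  have hε2 : ε * (‖X‖ * L + 1)^2 < 2 := by
    have hpos : (0:ℝ) < (‖X‖ * L + 1)^2 := by positivity
    exact (lt_div_iff₀ hpos).mp (lt_of_lt_of_le hε (min_le_right _ _))
  have hM : 0 ≤ ‖X‖ * L := mul_nonneg hXnn hL
  set k2 : ℝ := (1 - ε)^2 + ε^2 * (‖X‖ * L)^2 with hk2def
  have hk20 : 0 ≤ k2 := by positivity
  have hk21 : k2 < 1 := by nlinarith [hε2, hε0, hM, mul_nonneg hε0.le hM]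
  obtain ⟨c, hc, hlow⟩ := aux_coercive hC hX
  have hQnn : ∀ x : EuclideanSpace ℝ (Fin C), 0 ≤ QX X x := fun x => by
    simpa [QX] using hX.posSemidef.dotProduct_mulVec_nonneg x
  have hlowE : ∀ x : EuclideanSpace ℝ (Fin C), c * ‖x‖^2 ≤ QX X x := by
    intro x
    rw [aux_normsq]
    exact hlow x
  -- bound for the difference of the nonlinearity
  have hDsq : ∀ q p : EuclideanSpace ℝ (Fin C),
      (fun n => φ n (X.mulVec q n + vhat n) - φ n (X.mulVec p n + vhat n)) ⬝ᵥ
        (fun n => φ n (X.mulVec q n + vhat n) - φ n (X.mulVec p n + vhat n))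
      ≤ L^2 * ((X *ᵥ (q - p)) ⬝ᵥ (X *ᵥ (q - p))) := by
    intro q p
    simp only [dotProduct]
    rw [Finset.mul_sum]
    refine Finset.sum_le_sum fun n _ => ?_
    have h := hlip n (X.mulVec q n + vhat n) (X.mulVec p n + vhat n)
    have hw : X.mulVec q n + vhat n - (X.mulVec p n + vhat n) = (X *ᵥ (q - p)) n := by
      rw [aux_mulVec_sub]; ring
    rw [hw] at h
    calc (φ n (X.mulVec q n + vhat n) - φ n (X.mulVec p n + vhat n)) *
          (φ n (X.mulVec q n + vhat n) - φ n (X.mulVec p n + vhat n))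
        = |φ n (X.mulVec q n + vhat n) - φ n (X.mulVec p n + vhat n)| *
          |φ n (X.mulVec q n + vhat n) - φ n (X.mulVec p n + vhat n)| := (abs_mul_abs_self _).symm
      _ ≤ (L * |(X *ᵥ (q - p)) n|) * (L * |(X *ᵥ (q - p)) n|) :=
          mul_self_le_mul_self (abs_nonneg _) h
      _ = L^2 * ((X *ᵥ (q - p)) n * (X *ᵥ (q - p)) n) := by
          rw [show (L * |(X *ᵥ (q-p)) n|) * (L * |(X *ᵥ (q-p)) n|)
              = L^2 * (|(X *ᵥ (q-p)) n| * |(X *ᵥ (q-p)) n|) by ring, abs_mul_abs_self]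
  -- the cross term is nonpositive
  have hcross : ∀ q p : EuclideanSpace ℝ (Fin C),
      (q - p : EuclideanSpace ℝ (Fin C)) ⬝ᵥ
        (X *ᵥ (fun n => φ n (X.mulVec q n + vhat n) - φ n (X.mulVec p n + vhat n))) ≤ 0 := by
    intro q p
    rw [aux_sym hX.1]
    refine Finset.sum_nonpos fun n _ => ?_
    have hw : (X *ᵥ (q - p)) n = X.mulVec q n - X.mulVec p n := aux_mulVec_sub X q p n
    rcases le_total (X.mulVec q n + vhat n) (X.mulVec p n + vhat n) with hab | hab
    · have h1 : 0 ≤ φ n (X.mulVec q n + vhat n) - φ n (X.mulVec p n + vhat n) :=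
        sub_nonneg.mpr (hmono n hab)
      have h2 : (X *ᵥ (q - p)) n ≤ 0 := by rw [hw]; linarith
      exact mul_nonpos_of_nonneg_of_nonpos h1 h2
    · have h1 : φ n (X.mulVec q n + vhat n) - φ n (X.mulVec p n + vhat n) ≤ 0 :=
        sub_nonpos.mpr (hmono n hab)
      have h2 : 0 ≤ (X *ᵥ (q - p)) n := by rw [hw]; linarith
      exact mul_nonpos_of_nonpos_of_nonneg h1 h2
  -- the contraction estimate
  have key : ∀ q p : EuclideanSpace ℝ (Fin C),
      QX X (F q - F p) ≤ k2 * QX X (q - p) := by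
    intro q p
    show (F q - F p).ofLp ⬝ᵥ (X *ᵥ (F q - F p).ofLp) ≤ k2 * ((q - p).ofLp ⬝ᵥ (X *ᵥ (q - p).ofLp))
    have hFd : (F q - F p : EuclideanSpace ℝ (Fin C))
        = (1 - ε) • (fun n => q n - p n)
          + ε • (fun n => φ n (X.mulVec q n + vhat n) - φ n (X.mulVec p n + vhat n)) := by
      funext n
      show F q n - F p n = _
      rw [hF, hF]
      show _ = (1-ε) * (q n - p n) + ε * (φ n (X.mulVec q n + vhat n) - φ n (X.mulVec p n + vhat n))
      ring
    rw [hFd, aux_Qexp hX.1]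
    have hqp : (fun n => q n - p n) = (q - p : EuclideanSpace ℝ (Fin C)) := rfl
    rw [hqp]
    have h1 := hcross q p
    have h2 := hDsq q p
    have h3 : (X *ᵥ (q - p)) ⬝ᵥ (X *ᵥ (q - p))
        ≤ ‖X‖ * ((q - p : EuclideanSpace ℝ (Fin C)) ⬝ᵥ (X *ᵥ (q - p))) := aux_wQ hX (q - p)
    have h4 := aux_Qup X (fun n => φ n (X.mulVec q n + vhat n) - φ n (X.mulVec p n + vhat n))
    have h5 : (0:ℝ) ≤ 2 * (1 - ε) * ε := by nlinarith
    have hQd : 0 ≤ (q - p : EuclideanSpace ℝ (Fin C)) ⬝ᵥ (X *ᵥ (q - p)) := hQnn (q - p)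
    have hwnn := aux_dot_nonneg (X *ᵥ (q - p : EuclideanSpace ℝ (Fin C)))
    simp only [WithLp.ofLp_sub] at h1 h2 h3 h4 hQd hwnn ⊢
    nlinarith [mul_nonneg h5 (neg_nonneg.mpr h1), sq_nonneg ε,
      mul_le_mul_of_nonneg_left (h2.trans (mul_le_mul_of_nonneg_left h3 (by positivity)))
        (sq_nonneg ε),
      mul_le_mul_of_nonneg_left h4 (sq_nonneg ε),
      mul_nonneg (mul_nonneg hXnn hXnn) (mul_nonneg (mul_nonneg hL hL) hQd)]
  -- F is Lipschitz, hence continuous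
  have hFlip : ∀ q p : EuclideanSpace ℝ (Fin C),
      dist (F q) (F p) ≤ ((1 - ε) + ε * (L * ‖X‖)) * dist q p := by
    intro q p
    rw [dist_eq_norm, dist_eq_norm]
    have hFd : (F q - F p : EuclideanSpace ℝ (Fin C))
        = (1 - ε) • (q - p)
          + ε • ((EuclideanSpace.equiv (Fin C) ℝ).symm
              (fun n => φ n (X.mulVec q n + vhat n) - φ n (X.mulVec p n + vhat n))) := by
      ext n
      show F q n - F p n = (1-ε) * (q n - p n)
        + ε * (φ n (X.mulVec q n + vhat n) - φ n (X.mulVec p n + vhat n))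
      rw [hF, hF]; ring
    rw [hFd]
    have hnD : ‖(EuclideanSpace.equiv (Fin C) ℝ).symm
        (fun n => φ n (X.mulVec q n + vhat n) - φ n (X.mulVec p n + vhat n))‖
        ≤ L * ‖X‖ * ‖q - p‖ := by
      refine aux_le_of_sq_le_sq ?_ (by positivity)
      rw [aux_normsq]
      calc (fun n => φ n (X.mulVec q n + vhat n) - φ n (X.mulVec p n + vhat n)) ⬝ᵥ
            (fun n => φ n (X.mulVec q n + vhat n) - φ n (X.mulVec p n + vhat n))
          ≤ L^2 * ((X *ᵥ (q - p)) ⬝ᵥ (X *ᵥ (q - p))) := hDsq q p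
        _ ≤ L^2 * (‖X‖^2 * ((q - p : EuclideanSpace ℝ (Fin C)) ⬝ᵥ (q - p : EuclideanSpace ℝ (Fin C)))) :=
            mul_le_mul_of_nonneg_left (aux_opbound X (q - p)) (by positivity)
        _ = (L * ‖X‖ * ‖q - p‖)^2 := by
            rw [← aux_normsq (q - p : EuclideanSpace ℝ (Fin C))]; ring
    calc ‖(1 - ε) • (q - p) + ε • ((EuclideanSpace.equiv (Fin C) ℝ).symm
            (fun n => φ n (X.mulVec q n + vhat n) - φ n (X.mulVec p n + vhat n)))‖
        ≤ ‖(1 - ε) • (q - p : EuclideanSpace ℝ (Fin C))‖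
          + ‖ε • ((EuclideanSpace.equiv (Fin C) ℝ).symm
            (fun n => φ n (X.mulVec q n + vhat n) - φ n (X.mulVec p n + vhat n)))‖ :=
          norm_add_le _ _
      _ ≤ (1 - ε) * ‖q - p‖ + ε * (L * ‖X‖ * ‖q - p‖) := by
          rw [norm_smul, norm_smul, Real.norm_eq_abs, Real.norm_eq_abs,
            abs_of_nonneg (by linarith : (0:ℝ) ≤ 1 - ε), abs_of_nonneg hε0.le]
          exact add_le_add le_rfl (mul_le_mul_of_nonneg_left hnD hε0.le)
      _ = ((1 - ε) + ε * (L * ‖X‖)) * ‖q - p‖ := by ring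
  have hKnn : (0:ℝ) ≤ (1 - ε) + ε * (L * ‖X‖) := by nlinarith [mul_nonneg hL hXnn]
  have hFcont : Continuous F := by
    refine LipschitzWith.continuous (K := Real.toNNReal ((1 - ε) + ε * (L * ‖X‖))) ?_
    refine LipschitzWith.of_dist_le_mul fun q p => ?_
    rw [Real.coe_toNNReal _ hKnn]
    exact hFlip q p
  -- geometric decay of successive differences
  have hQiter : ∀ (q0 : EuclideanSpace ℝ (Fin C)) (t : ℕ),
      QX X (F^[t+1] q0 - F^[t] q0) ≤ k2^t * QX X (F q0 - q0) := by
    intro q0 t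
    induction t with
    | zero => simp
    | succ t ih =>
      have step := key (F^[t+1] q0) (F^[t] q0)
      rw [← Function.iterate_succ_apply' F t q0, ← Function.iterate_succ_apply' F (t+1) q0]
        at step
      calc QX X (F^[t+1+1] q0 - F^[t+1] q0)
          ≤ k2 * QX X (F^[t+1] q0 - F^[t] q0) := step
        _ ≤ k2 * (k2^t * QX X (F q0 - q0)) := mul_le_mul_of_nonneg_left ih hk20
        _ = k2^(t+1) * QX X (F q0 - q0) := by ring
  -- the iterates from 0 form a Cauchy sequence
  have hr1 : Real.sqrt k2 < 1 := by
    rw [show (1:ℝ) = Real.sqrt 1 by simp]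
    exact Real.sqrt_lt_sqrt hk20 (by simpa using hk21)
  have hcauchy : CauchySeq (fun t => F^[t] (0 : EuclideanSpace ℝ (Fin C))) := by
    refine cauchySeq_of_le_geometric (Real.sqrt k2)
      (Real.sqrt (QX X (F 0 - 0) / c)) hr1 fun t => ?_
    show dist (F^[t] (0 : EuclideanSpace ℝ (Fin C))) (F^[t+1] (0 : EuclideanSpace ℝ (Fin C)))
      ≤ Real.sqrt (QX X (F 0 - 0) / c) * Real.sqrt k2 ^ t
    rw [dist_comm, dist_eq_norm]
    have hQ1nn : 0 ≤ QX X (F 0 - 0) := hQnn _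
    refine aux_le_of_sq_le_sq ?_ (by positivity)
    have hchain : c * ‖(F^[t+1] (0 : EuclideanSpace ℝ (Fin C)) - F^[t] 0)‖^2
        ≤ k2^t * QX X (F 0 - 0) := le_trans (hlowE _) (hQiter 0 t)
    have hsq : (Real.sqrt (QX X (F 0 - 0) / c) * Real.sqrt k2 ^ t)^2
        = QX X (F 0 - 0) / c * k2^t := by
      rw [mul_pow, ← pow_mul, mul_comm t 2, pow_mul, Real.sq_sqrt (by positivity),
        Real.sq_sqrt hk20]
    rw [hsq, div_mul_eq_mul_div, le_div_iff₀ hc]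
    nlinarith [hchain]
  obtain ⟨qs, hqs⟩ := cauchySeq_tendsto_of_complete hcauchy
  -- qs is a fixed point of F
  have hfix : F qs = qs := by
    have h1 : Tendsto (fun t => F^[t+1] (0 : EuclideanSpace ℝ (Fin C))) atTop (nhds qs) :=
      hqs.comp (tendsto_add_atTop_nat 1)
    have h2 : Tendsto (fun t => F (F^[t] (0 : EuclideanSpace ℝ (Fin C)))) atTop (nhds (F qs)) :=
      (hFcont.tendsto qs).comp hqs
    have h3 : (fun t => F^[t+1] (0 : EuclideanSpace ℝ (Fin C)))
        = fun t => F (F^[t] (0 : EuclideanSpace ℝ (Fin C))) :=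
      funext fun t => Function.iterate_succ_apply' F t 0
    rw [h3] at h1
    exact tendsto_nhds_unique h2 h1
  -- convergence from any initial condition
  have hconv : ∀ q0 : EuclideanSpace ℝ (Fin C),
      Tendsto (fun t => F^[t] q0) atTop (nhds qs) := by
    intro q0
    have hQt : ∀ t : ℕ, QX X (F^[t] q0 - qs) ≤ k2^t * QX X (q0 - qs) := by
      intro t
      induction t with
      | zero => simp
      | succ t ih =>
        have step := key (F^[t] q0) qs
        rw [hfix, ← Function.iterate_succ_apply' F t q0] at step
        calc QX X (F^[t+1] q0 - qs) ≤ k2 * QX X (F^[t] q0 - qs) := step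
          _ ≤ k2 * (k2^t * QX X (q0 - qs)) := mul_le_mul_of_nonneg_left ih hk20
          _ = k2^(t+1) * QX X (q0 - qs) := by ring
    have hQ0nn : 0 ≤ QX X (q0 - qs) := hQnn _
    have hsqle : ∀ t : ℕ, ‖(F^[t] q0 - qs : EuclideanSpace ℝ (Fin C))‖^2
        ≤ QX X (q0 - qs) / c * k2^t := by
      intro t
      have h1 : c * ‖(F^[t] q0 - qs : EuclideanSpace ℝ (Fin C))‖^2 ≤ k2^t * QX X (q0 - qs) :=
        le_trans (hlowE _) (hQt t)
      rw [div_mul_eq_mul_div, le_div_iff₀ hc]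
      nlinarith [h1]
    have hlim0 : Tendsto (fun t : ℕ => QX X (q0 - qs) / c * k2^t) atTop (nhds 0) := by
      have := (tendsto_pow_atTop_nhds_zero_of_lt_one hk20 hk21).const_mul (QX X (q0 - qs) / c)
      simpa using this
    have h2 : Tendsto (fun t => ‖(F^[t] q0 - qs : EuclideanSpace ℝ (Fin C))‖^2) atTop (nhds 0) :=
      squeeze_zero (fun t => sq_nonneg _) hsqle hlim0
    have h3 : Tendsto (fun t => ‖(F^[t] q0 - qs : EuclideanSpace ℝ (Fin C))‖) atTop (nhds 0) := by
      have h4 := (Real.continuous_sqrt.tendsto 0).comp h2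
      simp only [Function.comp_def, Real.sqrt_zero] at h4
      have h5 : (fun t => Real.sqrt (‖(F^[t] q0 - qs : EuclideanSpace ℝ (Fin C))‖^2))
          = fun t => ‖(F^[t] q0 - qs : EuclideanSpace ℝ (Fin C))‖ :=
        funext fun t => Real.sqrt_sq (norm_nonneg _)
      rwa [h5] at h4
    exact tendsto_iff_norm_sub_tendsto_zero.mpr h3
  -- fixed points of F are exactly solutions of the equilibrium equation
  have hfixiff : ∀ q : EuclideanSpace ℝ (Fin C),
      (∀ n, q n = φ n (X.mulVec q n + vhat n)) ↔ F q = q := by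
    intro q
    constructor
    · intro h
      ext n
      rw [hF, ← h n]
      ring
    · intro h n
      have h1 : F q n = q n := congrArg (fun x : EuclideanSpace ℝ (Fin C) => x n) h
      rw [hF] at h1
      have h2 : ε * (φ n (X.mulVec q n + vhat n) - q n) = 0 := by linarith
      have h3 := (mul_eq_zero.mp h2).resolve_left hε0.ne'
      linarith
  refine ⟨qs, (hfixiff qs).mpr hfix, ?_, hconv, ?_⟩
  · intro q hq
    have hFq : F q = q := (hfixiff q).mp hq
    have h1 : QX X (q - qs) ≤ k2 * QX X (q - qs) := by
      have := key q qs
      rwa [hFq, hfix] at this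
    have h2 : QX X (q - qs) = 0 := by
      have := hQnn (q - qs)
      nlinarith [h1, this, hk21]
    have h3 : ‖(q - qs : EuclideanSpace ℝ (Fin C))‖^2 = 0 := by
      have h4 := hlowE (q - qs)
      rw [h2] at h4
      nlinarith [h4, sq_nonneg ‖(q - qs : EuclideanSpace ℝ (Fin C))‖, hc]
    have h6 : (q - qs : EuclideanSpace ℝ (Fin C)) = 0 :=
      norm_eq_zero.mp (pow_eq_zero_iff two_ne_zero |>.mp h3)
    exact sub_eq_zero.mp h6
  · -- voltages converge
    intro q0
    have hGlip : ∀ q p : EuclideanSpace ℝ (Fin C),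
        dist ((EuclideanSpace.equiv (Fin C) ℝ).symm (fun n => X.mulVec q n + vhat n))
          ((EuclideanSpace.equiv (Fin C) ℝ).symm (fun n => X.mulVec p n + vhat n))
          ≤ ‖X‖ * dist q p := by
      intro q p
      rw [dist_eq_norm, dist_eq_norm]
      have hGd : ((EuclideanSpace.equiv (Fin C) ℝ).symm (fun n => X.mulVec q n + vhat n)
          - (EuclideanSpace.equiv (Fin C) ℝ).symm (fun n => X.mulVec p n + vhat n))
          = (EuclideanSpace.equiv (Fin C) ℝ).symm (X *ᵥ (q - p)) := by
        ext n
        show (X.mulVec q n + vhat n) - (X.mulVec p n + vhat n) = (X *ᵥ (q - p)) n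
        rw [aux_mulVec_sub]; ring
      rw [hGd]
      exact X.l2_opNorm_mulVec (q - p)
    have hGcont : Continuous
        (fun q : EuclideanSpace ℝ (Fin C) =>
          (EuclideanSpace.equiv (Fin C) ℝ).symm (fun n => X.mulVec q n + vhat n)) := by
      refine LipschitzWith.continuous (K := Real.toNNReal ‖X‖) ?_
      refine LipschitzWith.of_dist_le_mul fun q p => ?_
      rw [Real.coe_toNNReal _ hXnn]
      exact hGlip q p
    exact (hGcont.tendsto qs).comp (hconv q0)
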